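/- arXiv:1401.0474 — 3 statements merged into one kernel-verified Lean document; each statement's English description precedes it below -/
import Mathlib

section
/- The 2×2 L-operator L(x) with entries L_{11}(x)=q^{H/2}-q^{-1}x q^{-H/2}, L_{12}(x)=(q-q^{-1})F q^{-H/2}, L_{21}(x)=(q-q^{-1})x E q^{H/2}, L_{22}(x)=q^{-H/2}-q^{-1}x q^{H/2}, over U_q(sl_2), satisfies the quantum determinant identity: L_{11}(x)L_{22}(q^{-2}x) - q^{-1}L_{21}(x)L_{12}(q^{-2}x) = 1 - q^{-2}(q-q^{-1})^2 C^{(l)} x + q^{-4}x^2, where C^{(l)} = EF + (q^{H-1}+q^{-H+1})/(q-q^{-1})^2. -/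
/-- the L-operator
`L(x) = [[q^{H/2} - q⁻¹x q^{-H/2}, λF q^{-H/2}], [λxE q^{H/2}, q^{-H/2} - q⁻¹x q^{H/2}]]`
over U_q(sl₂) satisfies the quantum determinant identity
`L₁₁(x)L₂₂(q⁻²x) - q⁻¹ L₂₁(x)L₁₂(q⁻²x) = 1 - q⁻²λ² C⁽ˡ⁾ x + q⁻⁴x²`,
where `λ = q - q⁻¹`, `k` denotes the invertible element `q^{H/2}` (so `q^H = k²`),
and `C⁽ˡ⁾ = EF + (q^{H-1} + q^{-H+1})/λ²`. -/
theorem stmt6 {K : Type*} [Field K] {A : Type*} [Ring A] [Algebra K A]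
    (q : K) (hq : q ≠ 0) (hq2 : q ^ 2 ≠ 1)
    (E F k kinv : A)
    (hk : k * kinv = 1) (hk' : kinv * k = 1)
    (hkE : k * E = q • (E * k)) (hkF : k * F = q⁻¹ • (F * k))
    (hEF : E * F - F * E = (q - q⁻¹)⁻¹ • (k ^ 2 - kinv ^ 2))
    (Cl : A)
    (hCl : Cl = E * F + ((q - q⁻¹) ^ 2)⁻¹ • (q⁻¹ • k ^ 2 + q • kinv ^ 2))
    (L : K → Matrix (Fin 2) (Fin 2) A)
    (hL : ∀ x : K, L x =
      !![k - (q⁻¹ * x) • kinv, (q - q⁻¹) • (F * kinv);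
         ((q - q⁻¹) * x) • (E * k), kinv - (q⁻¹ * x) • k]) :
    ∀ x : K,
      L x 0 0 * L (q⁻¹ ^ 2 * x) 1 1 - q⁻¹ • (L x 1 0 * L (q⁻¹ ^ 2 * x) 0 1)
        = (1 : A) - (q⁻¹ ^ 2 * (q - q⁻¹) ^ 2 * x) • Cl + (q⁻¹ ^ 4 * x ^ 2) • (1 : A) := by
  intro x
  have hlam : q - q⁻¹ ≠ 0 := by
    intro h
    apply hq2
    have h' := sub_eq_zero.mp h
    field_simp at h'
    rw [sq]; linear_combination h'
  have key : E * k * (F * kinv) = q⁻¹ • (E * F) := by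
    calc E * k * (F * kinv) = E * (k * F) * kinv := by noncomm_ring
    _ = E * (q⁻¹ • (F * k)) * kinv := by rw [hkF]
    _ = q⁻¹ • (E * F * (k * kinv)) := by
        rw [mul_smul_comm, smul_mul_assoc]; noncomm_ring
    _ = q⁻¹ • (E * F) := by rw [hk, mul_one]
  have h00 : L x 0 0 = k - (q⁻¹ * x) • kinv := by rw [hL]; simp
  have h11 : L (q⁻¹ ^ 2 * x) 1 1 = kinv - (q⁻¹ * (q⁻¹ ^ 2 * x)) • k := by rw [hL]; simp
  have h10 : L x 1 0 = ((q - q⁻¹) * x) • (E * k) := by rw [hL]; simp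
  have h01 : L (q⁻¹ ^ 2 * x) 0 1 = (q - q⁻¹) • (F * kinv) := by rw [hL]; simp
  rw [h00, h11, h10, h01, hCl]
  simp only [mul_sub, sub_mul, smul_mul_assoc, mul_smul_comm, smul_smul]
  rw [key, hk, hk', show k * k = k ^ 2 from (sq k).symm,
    show kinv * kinv = kinv ^ 2 from (sq kinv).symm]
  have hb := mul_inv_cancel₀ (pow_ne_zero 2 hlam)
  have hc : q⁻¹ ^ 2 * (q - q⁻¹) ^ 2 * x * ((q - q⁻¹) ^ 2)⁻¹ = q⁻¹ ^ 2 * x := by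
    calc q⁻¹ ^ 2 * (q - q⁻¹) ^ 2 * x * ((q - q⁻¹) ^ 2)⁻¹
        = q⁻¹ ^ 2 * x * ((q - q⁻¹) ^ 2 * ((q - q⁻¹) ^ 2)⁻¹) := by ring
      _ = q⁻¹ ^ 2 * x := by rw [hb, mul_one]
  have hred : (q⁻¹ ^ 2 * (q - q⁻¹) ^ 2 * x) •
        (((q - q⁻¹) ^ 2)⁻¹ • (q⁻¹ • k ^ 2 + q • kinv ^ 2) : A)
      = (q⁻¹ ^ 2 * x) • (q⁻¹ • k ^ 2 + q • kinv ^ 2) := by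
    rw [smul_smul, hc]
  rw [smul_add, hred]
  match_scalars <;> clear * - hq hq2 hlam
  all_goals field_simp
  all_goals try (left; ring)
  all_goals try ring
  all_goals field_simp
  all_goals ring
end

section
/- The q-exponential satisfies the Hadamard-type formula: for elements A, B of an associative algebra (over a field where (k)_q! are invertible), exp_q(A)·B·exp_q(A)^{-1} = Σ_{k≥0} B_k/(k)_q!, where B_0 = B and B_{k+1} = A B_k - q^k B_k A, whenever both sides are well-defined (e.g., A is nilpotent, or as an identity of formal power series in a parameter multiplying A). -/
/-- `(k)_q = (1-q^k)/(1-q)`. -/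
def stmt10.qnum {K : Type*} [Field K] (q : K) (k : ℕ) : K := (1 - q ^ k) / (1 - q)

/-- `(k)_q! = (1)_q (2)_q ⋯ (k)_q`. -/
def stmt10.qfact {K : Type*} [Field K] (q : K) (k : ℕ) : K :=
  ∏ i ∈ Finset.range k, stmt10.qnum q (i + 1)

/-- The q-exponential `exp_q(a) = Σ_k a^k/(k)_q!` of a nilpotent element `a` with
`a^N = 0` (the series terminates at `N`). -/
noncomputable def stmt10.expq {K : Type*} [Field K] {A : Type*} [Ring A] [Algebra K A]
    (q : K) (N : ℕ) (a : A) : A :=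
  ∑ k ∈ Finset.range N, (stmt10.qfact q k)⁻¹ • a ^ k

/-- The iterated q-commutators: `B₀ = b`, `B_{k+1} = [a, B_k]_{q^k} = a B_k - q^k B_k a`. -/
def stmt10.Bseq {K : Type*} [Field K] {A : Type*} [Ring A] [Algebra K A]
    (q : K) (a b : A) : ℕ → A
  | 0 => b
  | k + 1 => a * stmt10.Bseq q a b k - q ^ k • (stmt10.Bseq q a b k * a)

namespace stmt10aux

open Finset

variable {K : Type*} [Field K] {A : Type*} [Ring A] [Algebra K A]

noncomputable def al (q : K) (i : ℕ) : K := (stmt10.qfact q i)⁻¹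

noncomputable def be (q : K) : ℕ → K
  | 0 => 1
  | j + 1 => -q ^ j * be q j / stmt10.qnum q (j + 1)

noncomputable def S (q : K) (a b : A) (k : ℕ) : A :=
  ∑ i ∈ Finset.range (k + 1), (al q i * be q (k - i)) • (a ^ i * b * a ^ (k - i))

variable {q : K} (hq : ∀ k : ℕ, 1 ≤ k → q ^ k ≠ 1)

include hq

lemma hq1 : (1 : K) - q ≠ 0 := by
  have := hq 1 le_rfl; rw [pow_one] at this; exact sub_ne_zero_of_ne (Ne.symm this)

lemma qnum_ne (k : ℕ) : stmt10.qnum q (k + 1) ≠ 0 :=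
  div_ne_zero (sub_ne_zero_of_ne (Ne.symm (hq (k + 1) (Nat.le_add_left 1 k)))) (hq1 hq)

lemma qfact_ne (k : ℕ) : stmt10.qfact q k ≠ 0 :=
  Finset.prod_ne_zero_iff.2 fun i _ => qnum_ne hq i

omit hq in
lemma qfact_succ (k : ℕ) : stmt10.qfact q (k + 1) = stmt10.qfact q k * stmt10.qnum q (k + 1) :=
  Finset.prod_range_succ _ _

lemma al_succ (i : ℕ) : al q i = stmt10.qnum q (i + 1) * al q (i + 1) := by
  rw [al, al, qfact_succ, mul_inv, mul_comm ((stmt10.qfact q i)⁻¹), ← mul_assoc,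
    mul_inv_cancel₀ (qnum_ne hq i), one_mul]

lemma be_succ (j : ℕ) : stmt10.qnum q (j + 1) * be q (j + 1) = -q ^ j * be q j := by
  rw [be, mul_div_cancel₀ _ (qnum_ne hq j)]

omit hq in
lemma qnum_add (i j : ℕ) :
    stmt10.qnum q (i + 1) + q ^ (i + 1) * stmt10.qnum q (j + 1) = stmt10.qnum q (i + j + 2) := by
  rw [stmt10.qnum, stmt10.qnum, stmt10.qnum]
  field_simp
  ring

lemma coefkey (i j : ℕ) :
    al q i * be q (j + 1) - q ^ (i + j + 1) * (al q (i + 1) * be q j)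
      = stmt10.qnum q (i + j + 2) * (al q (i + 1) * be q (j + 1)) := by
  have h1 := al_succ hq i
  have h2 := be_succ hq j
  have h3 := qnum_add (q := q) i j
  linear_combination (be q (j + 1)) * h1 + (-(q ^ (i + 1) * al q (i + 1))) * h2
    + (al q (i + 1) * be q (j + 1)) * h3

omit hq in
lemma al_zero : al q 0 = 1 := by simp [al, stmt10.qfact]

lemma edge0 (k : ℕ) :
    -(q ^ k * (al q 0 * be q k)) = stmt10.qnum q (k + 1) * (al q 0 * be q (k + 1)) := by
  rw [al_zero, one_mul, one_mul, be_succ hq k]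
  ring

lemma edgetop (k : ℕ) :
    al q k * be q 0 = stmt10.qnum q (k + 1) * (al q (k + 1) * be q 0) := by
  rw [← mul_assoc, ← al_succ hq k]

lemma keyA (a b : A) (k : ℕ) :
    a * S q a b k - q ^ k • (S q a b k * a) = stmt10.qnum q (k + 1) • S q a b (k + 1) := by
  set f : ℕ → ℕ → A := fun i j => a ^ i * b * a ^ j with hf
  have hfl : ∀ i j, a * f i j = f (i + 1) j := by
    intro i j; simp only [hf]; simp [pow_succ', mul_assoc]
  have hfr : ∀ i j, f i j * a = f i (j + 1) := by
    intro i j; simp only [hf]; simp [pow_succ, mul_assoc]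
  set T : ℕ → A := fun i => (stmt10.qnum q (k + 1) * (al q i * be q (k + 1 - i))) • f i (k + 1 - i)
    with hT
  set U : ℕ → A := fun i => (al q i * be q (k - i)) • f (i + 1) (k - i) with hU
  set V : ℕ → A := fun i => (q ^ k * (al q i * be q (k - i))) • f i (k - i + 1) with hV
  have hL : a * S q a b k - q ^ k • (S q a b k * a)
      = (∑ i ∈ range (k + 1), U i) - ∑ i ∈ range (k + 1), V i := by
    rw [S, Finset.mul_sum, Finset.sum_mul, Finset.smul_sum]
    congr 1
    · exact Finset.sum_congr rfl fun i _ => by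
        rw [mul_smul_comm, hfl]
    · exact Finset.sum_congr rfl fun i _ => by
        rw [smul_mul_assoc, hfr, smul_smul]
  have hR : stmt10.qnum q (k + 1) • S q a b (k + 1) = ∑ i ∈ range (k + 2), T i := by
    rw [S, Finset.smul_sum]
    exact Finset.sum_congr rfl fun i _ => by rw [smul_smul]
  rw [hL, hR]
  rw [Finset.sum_range_succ' T, Finset.sum_range_succ (fun i => T (i + 1)),
    Finset.sum_range_succ U, Finset.sum_range_succ' V]
  have hmid : ∀ i ∈ range k, U i - V (i + 1) = T (i + 1) := by
    intro i hi
    have hik : i < k := Finset.mem_range.1 hi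
    obtain ⟨j, hj⟩ : ∃ j, k = i + j + 1 := ⟨k - i - 1, by omega⟩
    subst hj
    have e1 : i + j + 1 - i = j + 1 := by omega
    have e2 : i + j + 1 - (i + 1) = j := by omega
    have e3 : i + j + 1 + 1 - (i + 1) = j + 1 := by omega
    simp only [hU, hV, hT, e1, e2, e3]
    rw [← sub_smul, coefkey hq i j]
  have hUk : U k = T (k + 1) := by
    simp only [hU, hT, Nat.sub_self, Nat.add_sub_cancel_left]
    rw [edgetop hq k]
  have hV0 : -V 0 = T 0 := by
    simp only [hV, hT, Nat.sub_zero]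
    rw [← neg_smul, edge0 hq k]
  calc (∑ i ∈ range k, U i + U k) - (∑ i ∈ range k, V (i + 1) + V 0)
      = (∑ i ∈ range k, (U i - V (i + 1))) + U k + -V 0 := by
        rw [Finset.sum_sub_distrib]; abel
    _ = ∑ i ∈ range k, T (i + 1) + T (k + 1) + T 0 := by
        rw [Finset.sum_congr rfl hmid, hUk, hV0]

lemma Bseq_eq (a b : A) (k : ℕ) :
    stmt10.Bseq q a b k = stmt10.qfact q k • S q a b k := by
  induction k with
  | zero => simp [stmt10.Bseq, S, al, be, stmt10.qfact]
  | succ k ih =>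
    rw [stmt10.Bseq, ih]
    rw [mul_smul_comm, smul_mul_assoc, smul_comm (q ^ k), ← smul_sub, keyA hq a b k,
      smul_smul, ← qfact_succ]

lemma S_zero {a : A} {N : ℕ} (hN : a ^ N = 0) (b : A) (k : ℕ) (hk : 2 * N ≤ k) :
    S q a b k = 0 := by
  rw [S]
  refine Finset.sum_eq_zero fun i hi => ?_
  rcases le_or_gt N i with h | h
  · rw [pow_eq_zero_of_le h hN]; simp
  · have : N ≤ k - i := by omega
    rw [pow_eq_zero_of_le this hN]; simp

lemma Bone (k : ℕ) : stmt10.Bseq q (1 : K) (1 : K) (k + 1) = 0 := by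
  induction k with
  | zero => simp [stmt10.Bseq]
  | succ k ih => rw [stmt10.Bseq, ih]; simp

lemma csum (k : ℕ) (hk : 1 ≤ k) :
    ∑ i ∈ range (k + 1), al q i * be q (k - i) = 0 := by
  obtain ⟨k, rfl⟩ := Nat.exists_eq_add_of_le hk
  have h := Bseq_eq hq (1 : K) (1 : K) (1 + k)
  rw [add_comm 1 k] at h
  rw [Bone hq k] at h
  have hS : S q (1 : K) (1 : K) (k + 1) = 0 := by
    have := (smul_eq_zero.1 h.symm).resolve_left (qfact_ne hq (k + 1))
    exact this
  rw [S] at hS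
  rw [add_comm 1 k]
  rw [← hS]
  refine Finset.sum_congr rfl fun i _ => ?_
  simp [smul_eq_mul]

lemma mainsum {a : A} {N : ℕ} (hN : a ^ N = 0) (b : A) :
    ∑ k ∈ range (2 * N), S q a b k
      = (∑ i ∈ range N, al q i • a ^ i) * b * ∑ j ∈ range N, be q j • a ^ j := by
  set f : ℕ → ℕ → A := fun i j => (al q i * be q j) • (a ^ i * b * a ^ j) with hf
  have hz1 : ∀ i j, N ≤ i → f i j = 0 := by
    intro i j h; simp only [hf]; rw [pow_eq_zero_of_le h hN]; simp
  have hz2 : ∀ i j, N ≤ j → f i j = 0 := by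
    intro i j h; simp only [hf]; rw [pow_eq_zero_of_le h hN]; simp
  have step1 : ∑ k ∈ range (2 * N), S q a b k
      = ∑ m ∈ range (2 * N), ∑ k ∈ range (2 * N - m), f m k := by
    rw [← Finset.sum_range_diag_flip (2 * N) f]
    rfl
  rw [step1]
  have step2 : ∑ m ∈ range (2 * N), ∑ k ∈ range (2 * N - m), f m k
      = ∑ m ∈ range N, ∑ k ∈ range N, f m k := by
    rw [← Finset.sum_subset (Finset.range_subset_range.2 (by omega : N ≤ 2 * N))
      (fun m _ hm => ?_)]
    · refine Finset.sum_congr rfl fun m hm => ?_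
      have hmN : m < N := Finset.mem_range.1 hm
      rw [← Finset.sum_subset (Finset.range_subset_range.2 (by omega : N ≤ 2 * N - m))
        (fun k _ hk => hz2 m k (by simpa using hk))]
    · exact Finset.sum_eq_zero fun k _ => hz1 m k (by simpa using hm)
  rw [step2, Finset.sum_mul, Finset.sum_mul]
  refine Finset.sum_congr rfl fun i _ => ?_
  rw [Finset.mul_sum]
  refine Finset.sum_congr rfl fun j _ => ?_
  simp only [hf]
  rw [smul_mul_assoc, smul_mul_assoc, mul_smul_comm, smul_smul]

end stmt10aux

/-- q-analogue of the Hadamard formula: if `a` is nilpotent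
(`a^N = 0`) and `c` is the (two-sided) inverse of `exp_q(a)`, then
`exp_q(a)·b·exp_q(a)⁻¹ = Σ_{k≥0} B_k/(k)_q!`, the sum on the right being finite
since `B_k = 0` for `k ≥ 2N`. -/
theorem stmt10 {K : Type*} [Field K] {A : Type*} [Ring A] [Algebra K A]
    (q : K) (hq : ∀ k : ℕ, 1 ≤ k → q ^ k ≠ 1)
    (a b c : A) (N : ℕ) (hN : a ^ N = 0)
    (hc : stmt10.expq q N a * c = 1) (hc' : c * stmt10.expq q N a = 1) :
    (∀ k, 2 * N ≤ k → stmt10.Bseq q a b k = 0) ∧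
    stmt10.expq q N a * b * c
      = ∑ k ∈ Finset.range (2 * N), (stmt10.qfact q k)⁻¹ • stmt10.Bseq q a b k := by
  rcases Nat.eq_zero_or_pos N with rfl | hN1
  · have h01 : (0 : A) = 1 := by simpa using hN.symm
    haveI := subsingleton_of_zero_eq_one h01
    exact ⟨fun k _ => Subsingleton.elim _ _, Subsingleton.elim _ _⟩
  set E := stmt10.expq q N a with hEdef
  have hE : E = ∑ i ∈ Finset.range N, stmt10aux.al q i • a ^ i := rfl
  set E' := ∑ j ∈ Finset.range N, stmt10aux.be q j • a ^ j with hE'def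
  have hmain : ∀ b' : A, ∑ k ∈ Finset.range (2 * N), stmt10aux.S q a b' k = E * b' * E' :=
    fun b' => by rw [hE]; exact stmt10aux.mainsum hq hN b'
  have hEE' : E * E' = 1 := by
    have h := hmain 1
    rw [mul_one] at h
    rw [← h]
    rw [Finset.sum_eq_single 0]
    · simp [stmt10aux.S, stmt10aux.al, stmt10aux.be, stmt10.qfact]
    · intro k _ hk
      have hco : ∑ i ∈ Finset.range (k + 1), stmt10aux.al q i * stmt10aux.be q (k - i) = 0 :=
        stmt10aux.csum hq k (Nat.one_le_iff_ne_zero.2 hk)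
      rw [stmt10aux.S]
      have : ∀ i ∈ Finset.range (k + 1),
          (stmt10aux.al q i * stmt10aux.be q (k - i)) • (a ^ i * 1 * a ^ (k - i))
            = (stmt10aux.al q i * stmt10aux.be q (k - i)) • a ^ k := by
        intro i hi
        rw [mul_one, ← pow_add, Nat.add_sub_cancel' (Nat.lt_succ_iff.1 (Finset.mem_range.1 hi))]
      rw [Finset.sum_congr rfl this, ← Finset.sum_smul, hco, zero_smul]
    · intro h0
      exact absurd (Finset.mem_range.2 (by omega)) h0
  have hcE : c = E' := by
    have h2 : c * (E * E') = c := by rw [hEE', mul_one]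
    rw [← mul_assoc, hc', one_mul] at h2
    exact h2.symm
  refine ⟨fun k hk => ?_, ?_⟩
  · rw [stmt10aux.Bseq_eq hq, stmt10aux.S_zero hq hN b k hk, smul_zero]
  · rw [hcE, ← hmain b]
    refine Finset.sum_congr rfl fun k _ => ?_
    rw [stmt10aux.Bseq_eq hq, smul_smul, inv_mul_cancel₀ (stmt10aux.qfact_ne hq k), one_smul]
end

section
/- Let O = exp_{q^{-2}}((q-q^{-1})·e_1⊗f_2) in (a completion of) Osc_1 ⊗ Osc_2, where e_1⊗f_2 acts locally nilpotently. Then O·(e_2)·O^{-1} = e_2 + e_1 q^{-h_2} and O·(f_1)·O^{-1} = f_1 + f_2 q^{h_1}, while O·e_1·O^{-1} = e_1 and O·f_2·O^{-1} = f_2. (Here e_i, f_i, q^{±h_i} denote 1⊗x or x⊗1 appropriately.) -/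
namespace stmt11

/-- The model of W₁ ⊗ W₂: basis vectors `single (n,m) 1 = v⁽¹⁾ₙ ⊗ v⁽²⁾ₘ`. -/
abbrev V : Type := (ℕ × ℕ) →₀ ℂ

noncomputable def op (g : ℕ × ℕ → V) : V →ₗ[ℂ] V :=
  Finsupp.lsum ℂ fun p => LinearMap.toSpanSingleton ℂ V (g p)

/-- `e₁ ⊗ 1`. -/
noncomputable def e1 (q : ℂ) : V →ₗ[ℂ] V :=
  op fun p => Finsupp.single (p.1 - 1, p.2)
    (if p.1 = 0 then 0 else
      ((q ^ p.1 - q⁻¹ ^ p.1) / (q - q⁻¹)) * (q⁻¹ ^ p.1 * q) / (q - q⁻¹))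

/-- `f₁ ⊗ 1`. -/
noncomputable def f1 : V →ₗ[ℂ] V := op fun p => Finsupp.single (p.1 + 1, p.2) 1

/-- `1 ⊗ e₂`: `e₂ v⁽²⁾ₘ = -[m]_q q^{m-1}/(q-q⁻¹) v⁽²⁾_{m-1}`. -/
noncomputable def e2 (q : ℂ) : V →ₗ[ℂ] V :=
  op fun p => Finsupp.single (p.1, p.2 - 1)
    (if p.2 = 0 then 0 else
      -(((q ^ p.2 - q⁻¹ ^ p.2) / (q - q⁻¹)) * (q ^ p.2 * q⁻¹)) / (q - q⁻¹))

/-- `1 ⊗ f₂`. -/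
noncomputable def f2 : V →ₗ[ℂ] V := op fun p => Finsupp.single (p.1, p.2 + 1) 1

/-- `q^{h₁} ⊗ 1` (h₁ has eigenvalue `-2n`). -/
noncomputable def qh1 (q : ℂ) : V →ₗ[ℂ] V :=
  op fun p => Finsupp.single p (q⁻¹ ^ (2 * p.1))

/-- `1 ⊗ q^{-h₂}` (h₂ has eigenvalue `-2m`). -/
noncomputable def qmh2 (q : ℂ) : V →ₗ[ℂ] V :=
  op fun p => Finsupp.single p (q ^ (2 * p.2))

noncomputable def pnum (p : ℂ) (k : ℕ) : ℂ := (1 - p ^ k) / (1 - p)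
noncomputable def pfact (p : ℂ) (k : ℕ) : ℂ := ∏ i ∈ Finset.range k, pnum p (i + 1)

/-- `O = exp_{q⁻²}((q-q⁻¹)·e₁⊗f₂)` (the series is locally finite). -/
noncomputable def Oop (q : ℂ) : V →ₗ[ℂ] V :=
  op fun p => ∑ k ∈ Finset.range (p.1 + 1),
    (pfact (q⁻¹ ^ 2) k)⁻¹ • ((((q - q⁻¹) • (e1 q ∘ₗ f2)) ^ k) (Finsupp.single p 1))

end stmt11

namespace stmt11

-- auxiliary defs
noncomputable def cE1 (q : ℂ) (n : ℕ) : ℂ :=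
  if n = 0 then 0 else ((q ^ n - q⁻¹ ^ n) / (q - q⁻¹)) * (q⁻¹ ^ n * q) / (q - q⁻¹)

noncomputable def cE2 (q : ℂ) (m : ℕ) : ℂ :=
  if m = 0 then 0 else -(((q ^ m - q⁻¹ ^ m) / (q - q⁻¹)) * (q ^ m * q⁻¹)) / (q - q⁻¹)

noncomputable def Xop (q : ℂ) : V →ₗ[ℂ] V := (q - q⁻¹) • (e1 q ∘ₗ f2)

noncomputable def aa (q : ℂ) (n : ℕ) : ℂ := (q - q⁻¹) * cE1 q n

lemma op_single (g : ℕ × ℕ → V) (p : ℕ × ℕ) (c : ℂ) :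
    op g (Finsupp.single p c) = c • g p := by
  simp [op, Finsupp.lsum_single, LinearMap.toSpanSingleton_apply]

lemma e1_apply (q : ℂ) (n m : ℕ) (c : ℂ) :
    e1 q (Finsupp.single (n, m) c) = Finsupp.single (n - 1, m) (c * cE1 q n) := by
  rw [e1, op_single, Finsupp.smul_single', cE1]

lemma f1_apply (n m : ℕ) (c : ℂ) :
    f1 (Finsupp.single (n, m) c) = Finsupp.single (n + 1, m) c := by
  rw [f1, op_single, Finsupp.smul_single', mul_one]

lemma e2_apply (q : ℂ) (n m : ℕ) (c : ℂ) :
    e2 q (Finsupp.single (n, m) c) = Finsupp.single (n, m - 1) (c * cE2 q m) := by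
  rw [e2, op_single, Finsupp.smul_single', cE2]

lemma f2_apply (n m : ℕ) (c : ℂ) :
    f2 (Finsupp.single (n, m) c) = Finsupp.single (n, m + 1) c := by
  rw [f2, op_single, Finsupp.smul_single', mul_one]

lemma qh1_apply (q : ℂ) (n m : ℕ) (c : ℂ) :
    qh1 q (Finsupp.single (n, m) c) = Finsupp.single (n, m) (c * q⁻¹ ^ (2 * n)) := by
  rw [qh1, op_single, Finsupp.smul_single']

lemma qmh2_apply (q : ℂ) (n m : ℕ) (c : ℂ) :
    qmh2 q (Finsupp.single (n, m) c) = Finsupp.single (n, m) (c * q ^ (2 * m)) := by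
  rw [qmh2, op_single, Finsupp.smul_single']

lemma X_apply (q : ℂ) (n m : ℕ) (c : ℂ) :
    Xop q (Finsupp.single (n, m) c) = Finsupp.single (n - 1, m + 1) (c * aa q n) := by
  rw [Xop]
  simp only [LinearMap.smul_apply, LinearMap.comp_apply, f2_apply, e1_apply,
    Finsupp.smul_single', aa]
  ring_nf

end stmt11

namespace stmt11

lemma aa_zero (q : ℂ) : aa q 0 = 0 := by simp [aa, cE1]

lemma Xpow_apply (q : ℂ) (k n m : ℕ) (c : ℂ) :
    (Xop q ^ k) (Finsupp.single (n, m) c)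
      = Finsupp.single (n - k, m + k) (c * ∏ j ∈ Finset.range k, aa q (n - j)) := by
  induction k generalizing n m c with
  | zero => simp
  | succ k ih =>
    rw [pow_succ]
    show (Xop q ^ k) (Xop q (Finsupp.single (n, m) c)) = _
    rw [X_apply, ih]
    congr 1
    · simp [Nat.sub_sub]; omega
    · rw [Finset.prod_range_succ']
      simp only [Nat.sub_zero]
      rw [mul_comm (∏ _j ∈ _, _)]
      rw [← mul_assoc]
      congr 1
      apply Finset.prod_congr rfl
      intro j _
      congr 1
      omega

lemma Xpow_zero_apply (q : ℂ) (k n m : ℕ) (c : ℂ) (h : n + 1 ≤ k) :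
    (Xop q ^ k) (Finsupp.single (n, m) c) = 0 := by
  rw [Xpow_apply]
  have : ∏ j ∈ Finset.range k, aa q (n - j) = 0 := by
    apply Finset.prod_eq_zero (Finset.mem_range.2 (by omega : n < k))
    simp [aa_zero]
  rw [this, mul_zero, Finsupp.single_zero]

noncomputable def cc (q : ℂ) (k : ℕ) : ℂ := (pfact (q⁻¹ ^ 2) k)⁻¹

lemma Oop_apply (q : ℂ) (n m : ℕ) (c : ℂ) :
    Oop q (Finsupp.single (n, m) c)
      = ∑ k ∈ Finset.range (n + 1), cc q k • (Xop q ^ k) (Finsupp.single (n, m) c) := by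
  rw [Oop, op_single, Finset.smul_sum]
  apply Finset.sum_congr rfl
  intro k _
  rw [smul_comm]
  congr 1
  show c • ((Xop q ^ k) (Finsupp.single (n, m) 1)) = _
  rw [← map_smul, Finsupp.smul_single', mul_one]

lemma Oop_apply_ext (q : ℂ) (n m : ℕ) (c : ℂ) (K : ℕ) (h : n + 1 ≤ K) :
    Oop q (Finsupp.single (n, m) c)
      = ∑ k ∈ Finset.range K, cc q k • (Xop q ^ k) (Finsupp.single (n, m) c) := by
  rw [Oop_apply]
  apply Finset.sum_subset (Finset.range_subset_range.2 h)
  intro k _ hk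
  rw [Finset.mem_range, not_lt] at hk
  rw [Xpow_zero_apply q k n m c (by omega), smul_zero]

end stmt11

namespace stmt11

variable {q : ℂ}

lemma lam_ne (hq : q ≠ 0) (hroot : ∀ n : ℕ, n ≠ 0 → q ^ n ≠ 1) : q - q⁻¹ ≠ 0 := by
  intro h
  apply hroot 2 (by norm_num)
  have := sub_eq_zero.1 h
  field_simp at this
  exact this

lemma R1 (q : ℂ) : e1 q ∘ₗ Xop q = Xop q ∘ₗ e1 q := by
  apply Finsupp.lhom_ext
  rintro ⟨n, m⟩ c
  simp only [LinearMap.comp_apply, X_apply, e1_apply]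
  congr 1
  unfold aa; ring

lemma R2 (q : ℂ) : f2 ∘ₗ Xop q = Xop q ∘ₗ f2 := by
  apply Finsupp.lhom_ext
  rintro ⟨n, m⟩ c
  simp only [LinearMap.comp_apply, X_apply, f2_apply]

end stmt11

namespace stmt11
variable {q : ℂ}

lemma hqq (hq : q ≠ 0) : q - q⁻¹ = (q^2 - 1) * q⁻¹ := by field_simp

lemma hl_ne (hq : q ≠ 0) (hq1 : q^2 - 1 ≠ 0) : q - q⁻¹ ≠ 0 := by
  rw [hqq hq]; exact mul_ne_zero hq1 (inv_ne_zero hq)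

lemma cE1_eq (hq : q ≠ 0) (hq1 : q^2 - 1 ≠ 0) (n : ℕ) :
    cE1 q n = q^3 * (q^(2*n) - 1) / (q^(2*n) * (q^2-1)^2) := by
  rcases Nat.eq_zero_or_pos n with h | h
  · subst h; simp [cE1]
  · have hl := hl_ne hq hq1
    have hA : q ^ n ≠ 0 := pow_ne_zero _ hq
    rw [cE1, if_neg (by omega), div_mul_eq_mul_div, div_div,
      div_eq_div_iff (mul_ne_zero hl hl)
        (mul_ne_zero (pow_ne_zero _ hq) (pow_ne_zero 2 hq1))]
    simp only [inv_pow]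
    rw [two_mul, pow_add]
    field_simp

lemma cE2_eq (hq : q ≠ 0) (hq1 : q^2 - 1 ≠ 0) (m : ℕ) :
    cE2 q m = -((q^(2*m) - 1) * q) / ((q^2-1)^2) := by
  rcases Nat.eq_zero_or_pos m with h | h
  · subst h; simp [cE2]
  · have hl := hl_ne hq hq1
    have hA : q ^ m ≠ 0 := pow_ne_zero _ hq
    rw [cE2, if_neg (by omega), neg_div, neg_div, neg_inj, div_mul_eq_mul_div, div_div,
      div_eq_div_iff (mul_ne_zero hl hl) (pow_ne_zero 2 hq1)]
    simp only [inv_pow]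
    rw [two_mul, pow_add]
    field_simp

lemma aa_eq (hq : q ≠ 0) (hq1 : q^2 - 1 ≠ 0) (n : ℕ) :
    aa q n = q^2 * (q^(2*n) - 1) / (q^(2*n) * (q^2-1)) := by
  rw [aa, cE1_eq hq hq1, hqq hq]
  have hA : q ^ (2*n) ≠ 0 := pow_ne_zero _ hq
  field_simp

lemma cE2_zero (q : ℂ) : cE2 q 0 = 0 := by simp [cE2]

lemma Sgen (hq : q ≠ 0) (hq1 : q^2 - 1 ≠ 0) (n m : ℕ) :
    cE2 q m * aa q n = aa q n * cE2 q (m+1) + q^(2*m) * cE1 q n := by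
  rw [cE2_eq hq hq1, cE2_eq hq hq1, cE1_eq hq hq1, aa_eq hq hq1,
    show 2*(m+1) = 2*m + 2 by ring, pow_add]
  have hA : q ^ (2*n) ≠ 0 := pow_ne_zero _ hq
  have hB : q ^ (2*m) ≠ 0 := pow_ne_zero _ hq
  field_simp
  ring

lemma R3 (hq : q ≠ 0) (hq1 : q^2 - 1 ≠ 0) :
    Xop q ∘ₗ e2 q = e2 q ∘ₗ Xop q + e1 q ∘ₗ qmh2 q := by
  apply Finsupp.lhom_ext
  rintro ⟨n, m⟩ c
  simp only [LinearMap.comp_apply, LinearMap.add_apply, e2_apply, X_apply,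
    qmh2_apply, e1_apply, Nat.add_sub_cancel]
  rcases m with _ | m'
  · have h := Sgen hq hq1 n 0
    rw [cE2_zero, zero_mul] at h
    rw [cE2_zero, mul_zero, zero_mul, Finsupp.single_zero, ← Finsupp.single_add,
      show c * aa q n * cE2 q (0+1) + c * q ^ (2*0) * cE1 q n
        = c * (aa q n * cE2 q (0+1) + q^(2*0) * cE1 q n) by ring, ← h, mul_zero,
      Finsupp.single_zero]
  · rw [← Finsupp.single_add]
    congr 1
    have h := Sgen hq hq1 n (m'+1)
    calc c * cE2 q (m'+1) * aa q n = c * (cE2 q (m'+1) * aa q n) := by ring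
    _ = c * (aa q n * cE2 q (m'+1+1) + q^(2*(m'+1)) * cE1 q n) := by rw [h]
    _ = _ := by ring

end stmt11

namespace stmt11
variable {q : ℂ}

lemma cE1_zero (q : ℂ) : cE1 q 0 = 0 := by simp [cE1]
lemma aa_zero' (q : ℂ) : aa q 0 = 0 := aa_zero q

lemma S4 (hq : q ≠ 0) (hq1 : q^2 - 1 ≠ 0) (n m : ℕ) :
    q^(2*m) * cE1 q n * aa q (n-1) = q⁻¹^2 * (aa q n * (q^(2*(m+1)) * cE1 q (n-1))) := by
  rcases n with _ | n'
  · simp [cE1_zero, aa_zero']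
  · rw [Nat.add_sub_cancel, cE1_eq hq hq1, cE1_eq hq hq1, aa_eq hq hq1, aa_eq hq hq1,
      show 2*(m+1) = 2*m+2 by ring, show 2*(n'+1) = 2*n'+2 by ring, pow_add, pow_add]
    have hA : q ^ (2*n') ≠ 0 := pow_ne_zero _ hq
    have hB : q ^ (2*m) ≠ 0 := pow_ne_zero _ hq
    rw [inv_pow, eq_inv_mul_iff_mul_eq₀ (pow_ne_zero 2 hq)]
    generalize hXA : q^(2*n') = A at hA ⊢
    generalize hXB : q^(2*m) = B at hB ⊢
    field_simp

lemma R4 (hq : q ≠ 0) (hq1 : q^2 - 1 ≠ 0) :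
    Xop q ∘ₗ (e1 q ∘ₗ qmh2 q) = (q⁻¹^2) • ((e1 q ∘ₗ qmh2 q) ∘ₗ Xop q) := by
  apply Finsupp.lhom_ext
  rintro ⟨n, m⟩ c
  simp only [LinearMap.comp_apply, LinearMap.smul_apply, qmh2_apply, e1_apply, X_apply,
    Finsupp.smul_single']
  congr 1
  have h := S4 hq hq1 n m
  calc c * q^(2*m) * cE1 q n * aa q (n-1) = c * (q^(2*m) * cE1 q n * aa q (n-1)) := by ring
  _ = c * (q⁻¹^2 * (aa q n * (q^(2*(m+1)) * cE1 q (n-1)))) := by rw [h]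
  _ = _ := by ring

lemma S5 (hq : q ≠ 0) (hq1 : q^2 - 1 ≠ 0) (n : ℕ) :
    aa q (n+1) = aa q n + q⁻¹^(2*n) := by
  rw [aa_eq hq hq1, aa_eq hq hq1, inv_pow, show 2*(n+1) = 2*n+2 by ring, pow_add]
  have hA : q ^ (2*n) ≠ 0 := pow_ne_zero _ hq
  field_simp
  ring

lemma R5 (hq : q ≠ 0) (hq1 : q^2 - 1 ≠ 0) :
    Xop q ∘ₗ f1 = f1 ∘ₗ Xop q + f2 ∘ₗ qh1 q := by
  apply Finsupp.lhom_ext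
  rintro ⟨n, m⟩ c
  simp only [LinearMap.comp_apply, LinearMap.add_apply, f1_apply, X_apply, qh1_apply,
    f2_apply, Nat.add_sub_cancel]
  rcases n with _ | n'
  · rw [aa_zero', mul_zero, Finsupp.single_zero, zero_add]
    congr 1
    have h := S5 hq hq1 0
    rw [aa_zero', zero_add] at h
    rw [h, zero_add]
    exact (zero_add _).symm
  · rw [show n' + 1 - 1 + 1 = n' + 1 by omega, ← Finsupp.single_add]
    congr 1
    rw [S5 hq hq1 (n'+1)]
    ring

end stmt11

namespace stmt11
variable {q : ℂ}

lemma S6 (n : ℕ) (Z : ℂ) :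
    q⁻¹^(2*n) * Z = q⁻¹^2 * (Z * q⁻¹^(2*(n-1))) ∨ n = 0 := by
  rcases n with _ | n'
  · right; rfl
  · left
    rw [Nat.add_sub_cancel, show 2*(n'+1) = 2+2*n' by ring, pow_add]
    ring

lemma R6 (hq : q ≠ 0) (hq1 : q^2 - 1 ≠ 0) :
    Xop q ∘ₗ (f2 ∘ₗ qh1 q) = (q⁻¹^2) • ((f2 ∘ₗ qh1 q) ∘ₗ Xop q) := by
  apply Finsupp.lhom_ext
  rintro ⟨n, m⟩ c
  simp only [LinearMap.comp_apply, LinearMap.smul_apply, qh1_apply, f2_apply, X_apply,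
    Finsupp.smul_single']
  congr 1
  rcases S6 (q := q) n (aa q n) with h | h
  · calc c * q⁻¹^(2*n) * aa q n = c * (q⁻¹^(2*n) * aa q n) := by ring
    _ = c * (q⁻¹^2 * (aa q n * q⁻¹^(2*(n-1)))) := by rw [h]
    _ = _ := by ring
  · subst h; rw [aa_zero']; ring

/-- key abstract commutation: `X^(k+1) W = W X^(k+1) + (∑ t^i) Y X^k`. -/
lemma Xpow_W (X W Y : Module.End ℂ V) (t : ℂ) (hc : X * W = W * X + Y)
    (hXY : X * Y = t • (Y * X)) (k : ℕ) :
    X^(k+1) * W = W * X^(k+1) + (∑ i ∈ Finset.range (k+1), t^i) • (Y * X^k) := by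
  induction k with
  | zero => simpa using hc
  | succ k ih =>
    set s : ℂ := ∑ i ∈ Finset.range (k+1), t^i with hs
    have hgs : ∑ i ∈ Finset.range (k+1+1), t^i = t * s + 1 := by
      rw [geom_sum_succ]
    calc X^(k+1+1) * W = X * (X^(k+1) * W) := by rw [← mul_assoc, ← pow_succ']
    _ = X * (W * X^(k+1)) + s • (X * (Y * X^k)) := by rw [ih, mul_add, mul_smul_comm]
    _ = (X*W) * X^(k+1) + s • ((X*Y) * X^k) := by rw [mul_assoc, mul_assoc]
    _ = (W*X) * X^(k+1) + Y * X^(k+1) + (s*t) • ((Y*X) * X^k) := by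
        rw [hc, hXY, add_mul, smul_mul_assoc, smul_smul, add_assoc]
    _ = W * X^(k+1+1) + (Y * X^(k+1) + (s*t) • (Y * X^(k+1))) := by
        rw [mul_assoc, ← pow_succ', mul_assoc, ← pow_succ', add_assoc]
    _ = W * X^(k+1+1) + (∑ i ∈ Finset.range (k+1+1), t^i) • (Y * X^(k+1)) := by
        rw [hgs, add_smul, one_smul, mul_comm t s, add_comm ((s*t) • (Y * X ^ (k + 1)))]

end stmt11

namespace stmt11
variable {q : ℂ}

lemma cc_zero (q : ℂ) : cc q 0 = 1 := by simp [cc, pfact]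

lemma cc_rec (hq : q ≠ 0) (hroot : ∀ n : ℕ, n ≠ 0 → q ^ n ≠ 1) (k : ℕ) :
    cc q (k+1) * (∑ i ∈ Finset.range (k+1), (q⁻¹^2)^i) = cc q k := by
  have hp1 : (q⁻¹^2 : ℂ) ≠ 1 := by
    rw [inv_pow, Ne, inv_eq_one]
    exact hroot 2 two_ne_zero
  have hpk : ((q⁻¹^2 : ℂ))^(k+1) ≠ 1 := by
    rw [← pow_mul, inv_pow, Ne, inv_eq_one]
    exact hroot (2*(k+1)) (by omega)
  have hgeom : ∑ i ∈ Finset.range (k+1), (q⁻¹^2)^i = pnum (q⁻¹^2) (k+1) := by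
    rw [geom_sum_eq hp1, pnum, ← neg_sub ((q⁻¹^2)^(k+1)), ← neg_sub (q⁻¹^2), neg_div_neg_eq]
  have hpn : pnum (q⁻¹^2) (k+1) ≠ 0 := by
    rw [pnum]
    exact div_ne_zero (sub_ne_zero.2 (Ne.symm hpk)) (sub_ne_zero.2 (Ne.symm hp1))
  rw [hgeom, cc, cc, pfact, Finset.prod_range_succ, ← pfact, mul_inv, mul_assoc,
    inv_mul_cancel₀ hpn, mul_one]

lemma gen_sum (X W Y : Module.End ℂ V) (t : ℂ) (d : ℕ → ℂ)
    (hc : X * W = W * X + Y) (hXY : X * Y = t • (Y * X))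
    (hd : ∀ k, d (k+1) * (∑ i ∈ Finset.range (k+1), t^i) = d k)
    (v : V) (K : ℕ) (hz : Y ((X^K) v) = 0) :
    ∑ k ∈ Finset.range (K+1), d k • (X^k) (W v)
      = ∑ k ∈ Finset.range (K+1), d k • ((W + Y) ((X^k) v)) := by
  have hterm : ∀ i, d (i+1) • (X^(i+1)) (W v)
      = d (i+1) • W ((X^(i+1)) v) + d i • Y ((X^i) v) := by
    intro i
    have h : (X^(i+1)) (W v) = (X^(i+1) * W) v := rfl
    rw [h, Xpow_W X W Y t hc hXY i]
    simp only [LinearMap.add_apply, LinearMap.smul_apply, smul_add, smul_smul,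
      Module.End.mul_apply]
    rw [mul_comm (d (i+1)), mul_comm _ (d (i+1)), hd i]
  rw [Finset.sum_range_succ' (fun k => d k • (X^k) (W v))]
  simp only [hterm]
  rw [Finset.sum_add_distrib]
  have hRHS : ∑ k ∈ Finset.range (K+1), d k • ((W + Y) ((X^k) v))
      = (∑ k ∈ Finset.range K, d (k+1) • W ((X^(k+1)) v) + d 0 • W ((X^0) v))
        + ∑ k ∈ Finset.range (K+1), d k • Y ((X^k) v) := by
    simp only [LinearMap.add_apply, smul_add]
    rw [Finset.sum_add_distrib]
    congr 1
    exact Finset.sum_range_succ' (fun k => d k • W ((X^k) v)) K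
  rw [hRHS, Finset.sum_range_succ (fun k => d k • Y ((X^k) v)), hz, smul_zero, add_zero]
  have h0 : (X^(0:ℕ)) (W v) = W ((X^(0:ℕ)) v) := rfl
  rw [h0]
  ring_nf
  abel

end stmt11

namespace stmt11
variable {q : ℂ}

lemma T_e1 (q : ℂ) : Oop q ∘ₗ e1 q = e1 q ∘ₗ Oop q := by
  have hcom : Commute (e1 q : Module.End ℂ V) (Xop q) := by
    show e1 q * Xop q = Xop q * e1 q
    rw [Module.End.mul_eq_comp, Module.End.mul_eq_comp, R1]
  apply Finsupp.lhom_ext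
  rintro ⟨n, m⟩ c
  simp only [LinearMap.comp_apply, e1_apply]
  rw [Oop_apply_ext q (n-1) m (c * cE1 q n) (n+1) (by omega), Oop_apply q n m c, map_sum]
  apply Finset.sum_congr rfl
  intro k _
  rw [map_smul]
  congr 1
  have h : (Xop q ^ k) (e1 q (Finsupp.single (n, m) c))
      = e1 q ((Xop q ^ k) (Finsupp.single (n, m) c)) := by
    rw [← Module.End.mul_apply, ← Module.End.mul_apply, (hcom.pow_right k).eq]
  rw [← h, e1_apply]

lemma T_f2 (q : ℂ) : Oop q ∘ₗ f2 = f2 ∘ₗ Oop q := by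
  have hcom : Commute (f2 : Module.End ℂ V) (Xop q) := by
    show f2 * Xop q = Xop q * f2
    rw [Module.End.mul_eq_comp, Module.End.mul_eq_comp, R2]
  apply Finsupp.lhom_ext
  rintro ⟨n, m⟩ c
  simp only [LinearMap.comp_apply, f2_apply]
  rw [Oop_apply q n (m+1) c, Oop_apply q n m c, map_sum]
  apply Finset.sum_congr rfl
  intro k _
  rw [map_smul]
  congr 1
  have h : (Xop q ^ k) (f2 (Finsupp.single (n, m) c))
      = f2 ((Xop q ^ k) (Finsupp.single (n, m) c)) := by
    rw [← Module.End.mul_apply, ← Module.End.mul_apply, (hcom.pow_right k).eq]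
  rw [← h, f2_apply]

lemma T_e2 (hq : q ≠ 0) (hroot : ∀ n : ℕ, n ≠ 0 → q ^ n ≠ 1) :
    Oop q ∘ₗ e2 q = (e2 q + e1 q ∘ₗ qmh2 q) ∘ₗ Oop q := by
  have hq1 : q^2 - 1 ≠ 0 := sub_ne_zero.2 (hroot 2 two_ne_zero)
  apply Finsupp.lhom_ext
  rintro ⟨n, m⟩ c
  simp only [LinearMap.comp_apply]
  rw [e2_apply, Oop_apply q n (m-1) _, Oop_apply q n m c, map_sum]
  have hLHS : ∀ k : ℕ, (Xop q ^ k) (Finsupp.single (n, m-1) (c * cE2 q m))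
      = (Xop q ^ k) (e2 q (Finsupp.single (n, m) c)) := by
    intro k; rw [e2_apply]
  calc ∑ k ∈ Finset.range (n+1), cc q k • (Xop q ^ k) (Finsupp.single (n, m-1) (c * cE2 q m))
      = ∑ k ∈ Finset.range (n+1), cc q k • (Xop q ^ k) (e2 q (Finsupp.single (n, m) c)) := by
        simp only [hLHS]
  _ = ∑ k ∈ Finset.range (n+1),
        cc q k • ((e2 q + e1 q ∘ₗ qmh2 q) ((Xop q ^ k) (Finsupp.single (n, m) c))) := by
        apply gen_sum (Xop q) (e2 q) (e1 q ∘ₗ qmh2 q) (q⁻¹^2) (cc q)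
        · rw [Module.End.mul_eq_comp, Module.End.mul_eq_comp, R3 hq hq1]
        · rw [Module.End.mul_eq_comp, Module.End.mul_eq_comp, R4 hq hq1]
        · exact cc_rec hq hroot
        · rw [Xpow_apply]
          simp only [LinearMap.comp_apply, qmh2_apply, e1_apply, Nat.sub_self]
          rw [cE1_zero, mul_zero, Finsupp.single_zero]
  _ = _ := by
        apply Finset.sum_congr rfl
        intro k _
        rw [map_smul]

lemma T_f1 (hq : q ≠ 0) (hroot : ∀ n : ℕ, n ≠ 0 → q ^ n ≠ 1) :
    Oop q ∘ₗ f1 = (f1 + f2 ∘ₗ qh1 q) ∘ₗ Oop q := by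
  have hq1 : q^2 - 1 ≠ 0 := sub_ne_zero.2 (hroot 2 two_ne_zero)
  apply Finsupp.lhom_ext
  rintro ⟨n, m⟩ c
  simp only [LinearMap.comp_apply]
  rw [f1_apply, Oop_apply q (n+1) m c, Oop_apply_ext q n m c (n+2) (by omega), map_sum]
  have hLHS : ∀ k : ℕ, (Xop q ^ k) (Finsupp.single (n+1, m) c)
      = (Xop q ^ k) (f1 (Finsupp.single (n, m) c)) := by
    intro k; rw [f1_apply]
  calc ∑ k ∈ Finset.range (n+2), cc q k • (Xop q ^ k) (Finsupp.single (n+1, m) c)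
      = ∑ k ∈ Finset.range (n+1+1), cc q k • (Xop q ^ k) (f1 (Finsupp.single (n, m) c)) := by
        simp only [hLHS]
  _ = ∑ k ∈ Finset.range (n+1+1),
        cc q k • ((f1 + f2 ∘ₗ qh1 q) ((Xop q ^ k) (Finsupp.single (n, m) c))) := by
        apply gen_sum (Xop q) f1 (f2 ∘ₗ qh1 q) (q⁻¹^2) (cc q)
        · rw [Module.End.mul_eq_comp, Module.End.mul_eq_comp, R5 hq hq1]
        · rw [Module.End.mul_eq_comp, Module.End.mul_eq_comp, R6 hq hq1]
        · exact cc_rec hq hroot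
        · rw [Xpow_zero_apply q (n+1) n m c (by omega), map_zero]
  _ = _ := by
        apply Finset.sum_congr rfl
        intro k _
        rw [map_smul]

end stmt11

namespace stmt11
variable {q : ℂ}

noncomputable def Nop (q : ℂ) : Module.End ℂ V := 1 - Oop q

lemma Oop_eq_sub (q : ℂ) (w : V) : Oop q w = w - Nop q w := by
  simp [Nop, LinearMap.sub_apply]

lemma N_apply (q : ℂ) (n m : ℕ) (c : ℂ) :
    Nop q (Finsupp.single (n, m) c)
      = -∑ k ∈ Finset.range n, cc q (k+1) • (Xop q ^ (k+1)) (Finsupp.single (n, m) c) := by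
  have h : Nop q (Finsupp.single (n, m) c)
      = Finsupp.single (n, m) c - Oop q (Finsupp.single (n, m) c) := by
    simp [Nop, LinearMap.sub_apply]
  rw [h, Oop_apply, Finset.sum_range_succ'
    (fun k => cc q k • (Xop q ^ k) (Finsupp.single (n, m) c))]
  rw [cc_zero]
  simp only [pow_zero, one_smul, Module.End.one_apply]
  abel

lemma N_pow_zero (q : ℂ) : ∀ n m : ℕ, ∀ c : ℂ,
    ((Nop q)^(n+1)) (Finsupp.single (n, m) c) = 0 := by
  intro n
  induction n using Nat.strong_induction_on with
  | _ n ih =>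
    intro m c
    have hstep : ((Nop q)^(n+1)) (Finsupp.single (n, m) c)
        = ((Nop q)^n) (Nop q (Finsupp.single (n, m) c)) := by
      rw [pow_succ]; rfl
    rw [hstep, N_apply, map_neg, map_sum]
    have hterm : ∀ k ∈ Finset.range n,
        ((Nop q)^n) (cc q (k+1) • (Xop q ^ (k+1)) (Finsupp.single (n, m) c)) = 0 := by
      intro k hk
      rw [Finset.mem_range] at hk
      rw [map_smul, Xpow_apply]
      have hdecomp : (Nop q)^n = (Nop q)^(n - (n - (k+1) + 1)) * (Nop q)^(n - (k+1) + 1) := by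
        rw [← pow_add]
        congr 1
        omega
      rw [hdecomp, Module.End.mul_apply, ih (n - (k+1)) (by omega), map_zero, smul_zero]
    rw [Finset.sum_congr rfl hterm, Finset.sum_const_zero, neg_zero]

lemma N_pow_zero' (q : ℂ) (n m : ℕ) (c : ℂ) (j : ℕ) (h : n + 1 ≤ j) :
    ((Nop q)^j) (Finsupp.single (n, m) c) = 0 := by
  have : (Nop q)^j = (Nop q)^(j - (n+1)) * (Nop q)^(n+1) := by
    rw [← pow_add]; congr 1; omega
  rw [this, Module.End.mul_apply, N_pow_zero, map_zero]

noncomputable def OinvOp (q : ℂ) : V →ₗ[ℂ] V :=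
  op fun p => ∑ k ∈ Finset.range (p.1 + 1), ((Nop q)^k) (Finsupp.single p 1)

lemma Oinv_apply (q : ℂ) (n m : ℕ) (c : ℂ) :
    OinvOp q (Finsupp.single (n, m) c)
      = ∑ k ∈ Finset.range (n+1), ((Nop q)^k) (Finsupp.single (n, m) c) := by
  rw [OinvOp, op_single, Finset.smul_sum]
  apply Finset.sum_congr rfl
  intro k _
  rw [← map_smul, Finsupp.smul_single', mul_one]

lemma Oinv_apply_ext (q : ℂ) (n m : ℕ) (c : ℂ) (K : ℕ) (h : n + 1 ≤ K) :
    OinvOp q (Finsupp.single (n, m) c)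
      = ∑ k ∈ Finset.range K, ((Nop q)^k) (Finsupp.single (n, m) c) := by
  rw [Oinv_apply]
  apply Finset.sum_subset (Finset.range_subset_range.2 h)
  intro k _ hk
  rw [Finset.mem_range, not_lt] at hk
  exact N_pow_zero' q n m c k (by omega)

lemma OOinv (q : ℂ) : Oop q ∘ₗ OinvOp q = LinearMap.id := by
  apply Finsupp.lhom_ext
  rintro ⟨n, m⟩ c
  rw [LinearMap.comp_apply, LinearMap.id_apply, Oinv_apply, map_sum]
  have hterm : ∀ k : ℕ, Oop q (((Nop q)^k) (Finsupp.single (n, m) c))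
      = ((Nop q)^k) (Finsupp.single (n, m) c)
        - ((Nop q)^(k+1)) (Finsupp.single (n, m) c) := by
    intro k
    rw [Oop_eq_sub]
    congr 1
    rw [pow_succ']; rfl
  simp only [hterm]
  rw [Finset.sum_range_sub' (fun k => ((Nop q)^k) (Finsupp.single (n, m) c))]
  rw [N_pow_zero, sub_zero, pow_zero, Module.End.one_apply]

lemma OinvO (q : ℂ) : OinvOp q ∘ₗ Oop q = LinearMap.id := by
  apply Finsupp.lhom_ext
  rintro ⟨n, m⟩ c
  rw [LinearMap.comp_apply, LinearMap.id_apply, Oop_apply, map_sum]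
  have h1 : ∀ k : ℕ, OinvOp q ((Xop q ^ k) (Finsupp.single (n, m) c))
      = ∑ j ∈ Finset.range (n+1), ((Nop q)^j) ((Xop q ^ k) (Finsupp.single (n, m) c)) := by
    intro k
    rw [Xpow_apply, Oinv_apply_ext q (n-k) (m+k) _ (n+1) (by omega)]
  calc ∑ k ∈ Finset.range (n+1), OinvOp q (cc q k • (Xop q ^ k) (Finsupp.single (n, m) c))
      = ∑ k ∈ Finset.range (n+1), ∑ j ∈ Finset.range (n+1),
          cc q k • ((Nop q)^j) ((Xop q ^ k) (Finsupp.single (n, m) c)) := by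
        apply Finset.sum_congr rfl
        intro k _
        rw [map_smul, h1, Finset.smul_sum]
  _ = ∑ j ∈ Finset.range (n+1), ((Nop q)^j) (Oop q (Finsupp.single (n, m) c)) := by
        rw [Finset.sum_comm]
        apply Finset.sum_congr rfl
        intro j _
        rw [Oop_apply, map_sum]
        simp only [map_smul]
  _ = ∑ j ∈ Finset.range (n+1),
        (((Nop q)^j) (Finsupp.single (n, m) c) - ((Nop q)^(j+1)) (Finsupp.single (n, m) c)) := by
        apply Finset.sum_congr rfl
        intro j _
        rw [Oop_eq_sub, map_sub, pow_succ]
        rfl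

  _ = Finsupp.single (n, m) c := by
        rw [Finset.sum_range_sub' (fun j => ((Nop q)^j) (Finsupp.single (n, m) c))]
        rw [N_pow_zero, sub_zero, pow_zero, Module.End.one_apply]

end stmt11

/-- `O` is invertible on W₁⊗W₂ and
`O e₂ O⁻¹ = e₂ + e₁ q^{-h₂}`, `O f₁ O⁻¹ = f₁ + f₂ q^{h₁}`,
`O e₁ O⁻¹ = e₁`, `O f₂ O⁻¹ = f₂`. -/
theorem stmt11 (q : ℂ) (hq : q ≠ 0) (hroot : ∀ n : ℕ, n ≠ 0 → q ^ n ≠ 1) :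
    ∃ Oinv : stmt11.V →ₗ[ℂ] stmt11.V,
      stmt11.Oop q ∘ₗ Oinv = LinearMap.id ∧ Oinv ∘ₗ stmt11.Oop q = LinearMap.id ∧
      stmt11.Oop q ∘ₗ stmt11.e2 q ∘ₗ Oinv
        = stmt11.e2 q + stmt11.e1 q ∘ₗ stmt11.qmh2 q ∧
      stmt11.Oop q ∘ₗ stmt11.f1 ∘ₗ Oinv
        = stmt11.f1 + stmt11.f2 ∘ₗ stmt11.qh1 q ∧
      stmt11.Oop q ∘ₗ stmt11.e1 q ∘ₗ Oinv = stmt11.e1 q ∧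
      stmt11.Oop q ∘ₗ stmt11.f2 ∘ₗ Oinv = stmt11.f2 := by
  refine ⟨stmt11.OinvOp q, stmt11.OOinv q, stmt11.OinvO q, ?_, ?_, ?_, ?_⟩
  · rw [← LinearMap.comp_assoc, stmt11.T_e2 hq hroot, LinearMap.comp_assoc,
      stmt11.OOinv, LinearMap.comp_id]
  · rw [← LinearMap.comp_assoc, stmt11.T_f1 hq hroot, LinearMap.comp_assoc,
      stmt11.OOinv, LinearMap.comp_id]
  · rw [← LinearMap.comp_assoc, stmt11.T_e1 q, LinearMap.comp_assoc,
      stmt11.OOinv, LinearMap.comp_id]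
  · rw [← LinearMap.comp_assoc, stmt11.T_f2 q, LinearMap.comp_assoc,
      stmt11.OOinv, LinearMap.comp_id]
end
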